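/- For all real numbers γ₁, γ₂ and every i ∈ {0, 2, 4}, the lines ℓ⁺ = {(γ₁/√3)·x^i + (γ₂/√3)·x^{i+1} + λ·x^i : λ ∈ ℝ} and ℓ⁻ = {−(γ₁/√3)·x^i − (γ₂/√3)·x^{i+1} + λ·x^i : λ ∈ ℝ} are in the same Δ₀-orbit (i.e., there exists t ∈ Δ₀ with ℓ⁻ = {z + t : z ∈ ℓ⁺}) if and only if 2γ₂ ∈ G. -/

import Mathlib

/-- `x = exp(πi/6)`, a primitive 12th root of unity. -/
noncomputable def x : ℂ := Complex.exp (Real.pi * Complex.I / 6)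

/-- `G = ℤ[√3]` as a subset of `ℝ`. -/
def G : Set ℝ := {r | ∃ a b : ℤ, r = a + b * Real.sqrt 3}

/-- `Δ₀ = (1/√3)·ℤ[x]`, the additive subgroup of `ℂ` generated by
`(1/√3)·x^k`, `0 ≤ k ≤ 5`. -/
def Delta0 : Set ℂ :=
  {z | ∃ n : Fin 6 → ℤ,
    z = ∑ k : Fin 6, (n k : ℂ) * ((1 / (Real.sqrt 3 : ℂ)) * x ^ (k : ℕ))}

lemma x_def : x = (Real.sqrt 3 : ℂ)/2 + Complex.I/2 := by
  have h : (Real.pi * Complex.I / 6 : ℂ) = ((Real.pi / 6 : ℝ) : ℂ) * Complex.I := by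
    push_cast; ring
  rw [x, h, Complex.exp_mul_I, ← Complex.ofReal_cos, ← Complex.ofReal_sin,
    Real.cos_pi_div_six, Real.sin_pi_div_six]
  push_cast; ring

lemma h3 : (Real.sqrt 3 : ℂ) * (Real.sqrt 3 : ℂ) = 3 := by
  norm_cast; exact Real.mul_self_sqrt (by norm_num)

lemma hx1' : x = ((Real.sqrt 3/2 : ℝ) : ℂ) + ((1/2 : ℝ) : ℂ) * Complex.I := by
  rw [x_def]; push_cast; ring

lemma hx2' : x^2 = ((1/2 : ℝ) : ℂ) + ((Real.sqrt 3/2 : ℝ) : ℂ) * Complex.I := by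
  rw [x_def]; push_cast
  linear_combination (1/4 : ℂ) * h3 + (1/4 : ℂ) * Complex.I_sq

lemma hx3 : x^3 = Complex.I := by
  have h : x^3 = x * x^2 := by ring
  rw [h, hx2', x_def]; push_cast
  linear_combination (Complex.I/4) * h3 + ((Real.sqrt 3 :ℂ)/4) * Complex.I_sq

lemma hx4' : x^4 = ((-(1/2) : ℝ) : ℂ) + ((Real.sqrt 3/2 : ℝ) : ℂ) * Complex.I := by
  have h : x^4 = x * x^3 := by ring
  rw [h, hx3, x_def]; push_cast
  linear_combination (1/2 : ℂ) * Complex.I_sq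

lemma hx5' : x^5 = ((-(Real.sqrt 3)/2 : ℝ) : ℂ) + ((1/2 : ℝ) : ℂ) * Complex.I := by
  have h : x^5 = x^2 * x^3 := by ring
  rw [h, hx3, hx2']; push_cast
  linear_combination ((Real.sqrt 3:ℂ)/2) * Complex.I_sq

lemma hx6 : x^6 = -1 := by
  have h : x^6 = (x^3)^2 := by ring
  rw [h, hx3, Complex.I_sq]

lemma hsx : (Real.sqrt 3 : ℂ) * x = 1 + x^2 := by
  rw [hx2', hx1']; push_cast
  linear_combination (1/2 : ℂ) * h3

theorem stmt16 (γ₁ γ₂ : ℝ) (i : ℕ) (hi : i ∈ ({0, 2, 4} : Set ℕ)) :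
    (∃ t ∈ Delta0,
      {z : ℂ | ∃ lam : ℝ,
          z = -(((γ₁ : ℂ) / (Real.sqrt 3 : ℂ)) * x ^ i) -
              ((γ₂ : ℂ) / (Real.sqrt 3 : ℂ)) * x ^ (i + 1) + (lam : ℂ) * x ^ i} =
        (fun z => z + t) ''
          {z : ℂ | ∃ lam : ℝ,
            z = ((γ₁ : ℂ) / (Real.sqrt 3 : ℂ)) * x ^ i +
                ((γ₂ : ℂ) / (Real.sqrt 3 : ℂ)) * x ^ (i + 1) + (lam : ℂ) * x ^ i}) ↔
      2 * γ₂ ∈ G := by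
  have hs : ((Real.sqrt 3 : ℝ) : ℂ) ≠ 0 := by
    simp [Complex.ofReal_ne_zero]
  have hr3 : Real.sqrt 3 * Real.sqrt 3 = 3 := Real.mul_self_sqrt (by norm_num)
  simp only [Set.mem_insert_iff, Set.mem_singleton_iff] at hi
  constructor
  · rintro ⟨t, ⟨n, hn⟩, hset⟩
    have hbase : ((γ₁ : ℂ) / (Real.sqrt 3 : ℂ)) * x ^ i +
        ((γ₂ : ℂ) / (Real.sqrt 3 : ℂ)) * x ^ (i + 1) + t ∈
        {z : ℂ | ∃ lam : ℝ,
            z = -(((γ₁ : ℂ) / (Real.sqrt 3 : ℂ)) * x ^ i) -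
                ((γ₂ : ℂ) / (Real.sqrt 3 : ℂ)) * x ^ (i + 1) + (lam : ℂ) * x ^ i} := by
      rw [hset]
      exact ⟨_, ⟨0, by push_cast; ring⟩, rfl⟩
    obtain ⟨lam, hlam⟩ := hbase
    subst hn
    rw [Fin.sum_univ_six] at hlam
    rcases hi with rfl | rfl | rfl
    · field_simp at hlam
      rw [show ((0:Fin 6):ℕ) = 0 from rfl, show ((1:Fin 6):ℕ) = 1 from rfl,
        show ((2:Fin 6):ℕ) = 2 from rfl, pow_zero, pow_one,
        show ((3:Fin 6):ℕ) = 3 from rfl,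
        show ((4:Fin 6):ℕ) = 4 from rfl, show ((5:Fin 6):ℕ) = 5 from rfl,
        hx2', hx3, hx4', hx5', hx1'] at hlam
      have him := congrArg Complex.im hlam
      simp only [Complex.add_im, Complex.add_re, Complex.sub_im, Complex.sub_re,
        Complex.neg_im, Complex.neg_re, Complex.mul_im, Complex.mul_re,
        Complex.ofReal_re, Complex.ofReal_im, Complex.I_re, Complex.I_im,
        Complex.intCast_re, Complex.intCast_im, Complex.one_re, Complex.one_im,
        mul_zero, zero_mul, mul_one, one_mul, add_zero, zero_add, sub_zero, zero_sub,
        neg_zero] at him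
      refine ⟨-(n 1 + 2 * n 3 + n 5), -(n 2 + n 4), ?_⟩
      push_cast
      linear_combination 2 * him
    · field_simp at hlam
      rw [show ((0:Fin 6):ℕ) = 0 from rfl, show ((1:Fin 6):ℕ) = 1 from rfl,
        show ((2:Fin 6):ℕ) = 2 from rfl, pow_zero, pow_one,
        show ((3:Fin 6):ℕ) = 3 from rfl,
        show ((4:Fin 6):ℕ) = 4 from rfl, show ((5:Fin 6):ℕ) = 5 from rfl,
        hx2', hx3, hx4', hx5', hx1'] at hlam
      have him := congrArg Complex.im hlam
      have hre := congrArg Complex.re hlam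
      simp only [Complex.add_im, Complex.add_re, Complex.sub_im, Complex.sub_re,
        Complex.neg_im, Complex.neg_re, Complex.mul_im, Complex.mul_re,
        Complex.ofReal_re, Complex.ofReal_im, Complex.I_re, Complex.I_im,
        Complex.intCast_re, Complex.intCast_im, Complex.one_re, Complex.one_im,
        mul_zero, zero_mul, mul_one, one_mul, add_zero, zero_add, sub_zero, zero_sub,
        neg_zero] at him hre
      refine ⟨n 1 - n 3 - 2 * n 5, n 0 - n 4, ?_⟩
      push_cast
      linear_combination him - Real.sqrt 3 * hre +
        (((n 1 : ℝ) - (n 5 : ℝ)) / 2) * hr3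
    · field_simp at hlam
      rw [show ((0:Fin 6):ℕ) = 0 from rfl, show ((1:Fin 6):ℕ) = 1 from rfl,
        show ((2:Fin 6):ℕ) = 2 from rfl, pow_zero, pow_one,
        show ((3:Fin 6):ℕ) = 3 from rfl,
        show ((4:Fin 6):ℕ) = 4 from rfl, show ((5:Fin 6):ℕ) = 5 from rfl,
        hx2', hx3, hx4', hx5', hx1'] at hlam
      have him := congrArg Complex.im hlam
      have hre := congrArg Complex.re hlam
      simp only [Complex.add_im, Complex.add_re, Complex.sub_im, Complex.sub_re,
        Complex.neg_im, Complex.neg_re, Complex.mul_im, Complex.mul_re,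
        Complex.ofReal_re, Complex.ofReal_im, Complex.I_re, Complex.I_im,
        Complex.intCast_re, Complex.intCast_im, Complex.one_re, Complex.one_im,
        mul_zero, zero_mul, mul_one, one_mul, add_zero, zero_add, sub_zero, zero_sub,
        neg_zero] at him hre
      refine ⟨2 * n 1 + n 3 - n 5, n 0 + n 2, ?_⟩
      push_cast
      linear_combination -him - Real.sqrt 3 * hre +
        (((n 1 : ℝ) - (n 5 : ℝ)) / 2 - γ₂) * hr3
  · rintro ⟨a, b, hab⟩
    have hab' : (2 * (γ₂:ℂ)) = (a : ℂ) + (b : ℂ) * ((Real.sqrt 3 : ℝ) : ℂ) := by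
      exact_mod_cast congrArg Complex.ofReal hab
    refine ⟨-(2 * (γ₂ : ℂ) / ((Real.sqrt 3 : ℝ) : ℂ)) * x ^ (i + 1), ?_, ?_⟩
    · rcases hi with rfl | rfl | rfl
      · refine ⟨![-b, -a, -b, 0, 0, 0], ?_⟩
        rw [Fin.sum_univ_six]
        norm_num
        simp only [show ((3:Fin 6):ℕ) = 3 from rfl, show ((4:Fin 6):ℕ) = 4 from rfl,
          show ((5:Fin 6):ℕ) = 5 from rfl,
          show (![-b, -a, -b, 0, 0, 0] : Fin 6 → ℤ) 5 = (0:ℤ) from rfl]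
        push_cast
        linear_combination (-(x : ℂ)/((Real.sqrt 3 : ℝ):ℂ)) * hab' -
          ((b : ℂ)/((Real.sqrt 3 : ℝ):ℂ)) * hsx
      · refine ⟨![0, 0, -b, -a, -b, 0], ?_⟩
        rw [Fin.sum_univ_six]
        norm_num
        simp only [show ((3:Fin 6):ℕ) = 3 from rfl, show ((4:Fin 6):ℕ) = 4 from rfl,
          show ((5:Fin 6):ℕ) = 5 from rfl,
          show (![0, 0, -b, -a, -b, 0] : Fin 6 → ℤ) 5 = (0:ℤ) from rfl]
        push_cast
        linear_combination (-(x^3 : ℂ)/((Real.sqrt 3 : ℝ):ℂ)) * hab' -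
          ((b : ℂ) * x^2/((Real.sqrt 3 : ℝ):ℂ)) * hsx
      · refine ⟨![b, 0, 0, 0, -b, -a], ?_⟩
        rw [Fin.sum_univ_six]
        norm_num
        simp only [show ((3:Fin 6):ℕ) = 3 from rfl, show ((4:Fin 6):ℕ) = 4 from rfl,
          show ((5:Fin 6):ℕ) = 5 from rfl,
          show (![b, 0, 0, 0, -b, -a] : Fin 6 → ℤ) 5 = -a from rfl]
        push_cast
        linear_combination (-(x^5 : ℂ)/((Real.sqrt 3 : ℝ):ℂ)) * hab' -
          ((b : ℂ) * x^4/((Real.sqrt 3 : ℝ):ℂ)) * hsx -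
          ((b : ℂ)/((Real.sqrt 3 : ℝ):ℂ)) * hx6
    · ext z
      simp only [Set.mem_setOf_eq, Set.mem_image]
      constructor
      · rintro ⟨lam, rfl⟩
        refine ⟨((γ₁ : ℂ) / (Real.sqrt 3 : ℂ)) * x ^ i +
            ((γ₂ : ℂ) / (Real.sqrt 3 : ℂ)) * x ^ (i + 1) +
            ((lam - 2 * γ₁ / Real.sqrt 3 : ℝ) : ℂ) * x ^ i,
          ⟨lam - 2 * γ₁ / Real.sqrt 3, rfl⟩, ?_⟩
        push_cast
        ring
      · rintro ⟨w, ⟨lam, rfl⟩, rfl⟩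
        refine ⟨lam + 2 * γ₁ / Real.sqrt 3, ?_⟩
        push_cast
        ring
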